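/- Let g₁,…,g_m be non-decreasing, right-continuous, unbounded functions on [0,∞) with gᵢ(0)=0 and gᵢ(t)>0 for t>0; let f := Σᵢ gᵢ⁻¹, κ := f⁻¹, γ = (g₁⁻¹ ∘̃ κ, …, g_m⁻¹ ∘̃ κ). Suppose t = (t₁,…,t_m) ∈ ℝ₊^m satisfies gᵢ(tᵢ) = g_{i+1}(t_{i+1}) for all i ∈ [m−1]. If for each i, gᵢ is continuous at tᵢ and strictly increasing from the left at tᵢ, then t = γ(t₁ + ⋯ + t_m). -/

import Mathlib

open Set Function Filter

/-- Right-continuous generalized inverse: `h⁻¹(s) = inf {u > 0 : h(u) > s}`. -/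
noncomputable def ginv (h : ℝ → ℝ) (s : ℝ) : ℝ := sInf {u : ℝ | 0 < u ∧ s < h u}

/-- Left limit of a function monotone on `[0,∞)`, with the convention `h(0−) = h(0)`. -/
noncomputable def llim (h : ℝ → ℝ) (u : ℝ) : ℝ :=
  if u ≤ 0 then h 0 else sSup (h '' Set.Ico 0 u)

/-- Right-continuity on `[0,∞)`. -/
def RightCts (h : ℝ → ℝ) : Prop := ∀ x : ℝ, 0 ≤ x → ContinuousWithinAt h (Set.Ici x) x

/-- The class `D₀↑↑(ℝ₊)`: non-decreasing, right-continuous, `h 0 = 0`, strictly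
positive on `(0,∞)`, and unbounded. -/
def Dpp (h : ℝ → ℝ) : Prop :=
  MonotoneOn h (Set.Ici 0) ∧ RightCts h ∧ h 0 = 0 ∧ (∀ t : ℝ, 0 < t → 0 < h t) ∧
    (∀ M : ℝ, ∃ t : ℝ, 0 ≤ t ∧ M < h t)

/-- `h` jumps at `u`: `h(u−) < h(u)`. -/
noncomputable def JumpAt (h : ℝ → ℝ) (u : ℝ) : Prop := llim h u < h u

/-- Compatibility condition (H1): whenever `g` jumps at `u`, the level set
`{r ≥ 0 : κ r = u}` has positive length. -/
def H1 (g κ : ℝ → ℝ) : Prop :=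
  ∀ u : ℝ, JumpAt g u → ∃ r₁ r₂ : ℝ, 0 ≤ r₁ ∧ r₁ < r₂ ∧ κ r₁ = u ∧ κ r₂ = u

/-- Compatibility condition (H2): whenever `κ(s−) < κ(s)`, `g(κ(s−)) = g(κ(s)−)`. -/
def H2 (g κ : ℝ → ℝ) : Prop :=
  ∀ s : ℝ, 0 ≤ s → llim κ s < κ s → g (llim κ s) = llim g (κ s)

-- Smooth composition `g ∘̃ κ`: equal to `g ∘ κ` outside the intervals
-- `[κ⁻¹(u−), κ⁻¹(u)]` over jump points `u` of `g`, and on each such interval the linear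
-- interpolation between `(κ⁻¹(u−), g(u−))` and `(κ⁻¹(u), g(u))`.
open scoped Classical in
noncomputable def stilde (g κ : ℝ → ℝ) (s : ℝ) : ℝ :=
  if h : ∃ u : ℝ, JumpAt g u ∧ s ∈ Set.Icc (llim (ginv κ) u) (ginv κ u) then
    let u := Classical.choose h
    llim g u + (g u - llim g u) * (s - llim (ginv κ) u) / (ginv κ u - llim (ginv κ) u)
  else g (κ s)

namespace Stmt14Aux

variable {h : ℝ → ℝ}

lemma ginv_bdd (s : ℝ) : BddBelow {u : ℝ | 0 < u ∧ s < h u} :=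
  ⟨0, fun _ hx => hx.1.le⟩

lemma ginv_nonneg {s : ℝ} (hne : {u : ℝ | 0 < u ∧ s < h u}.Nonempty) :
    0 ≤ ginv h s :=
  le_csInf hne fun _ hx => hx.1.le

lemma ginv_le {s v : ℝ} (hv : 0 < v) (hsv : s < h v) : ginv h s ≤ v :=
  csInf_le (ginv_bdd s) ⟨hv, hsv⟩

lemma le_ginv {s w : ℝ} (hne : {u : ℝ | 0 < u ∧ s < h u}.Nonempty)
    (H : ∀ v, 0 < v → s < h v → w ≤ v) : w ≤ ginv h s :=
  le_csInf hne fun v hv => H v hv.1 hv.2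

lemma le_ginv_of_le (hmono : ∀ a b, 0 ≤ a → a ≤ b → h a ≤ h b)
    {s w : ℝ} (hne : {u : ℝ | 0 < u ∧ s < h u}.Nonempty)
    (hw : 0 ≤ w) (hws : h w ≤ s) : w ≤ ginv h s := by
  refine le_ginv hne fun v hv hsv => ?_
  by_contra hc
  push_neg at hc
  exact absurd hsv (not_lt.2 ((hmono v w hv.le hc.le).trans hws))

lemma ginv_mono (hne : ∀ s : ℝ, {u : ℝ | 0 < u ∧ s < h u}.Nonempty) :
    Monotone (ginv h) := fun a b hab =>
  csInf_le_csInf (ginv_bdd a) (hne b) fun v hv => ⟨hv.1, lt_of_le_of_lt hab hv.2⟩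

lemma llim_of_pos {u : ℝ} (hu : 0 < u) : llim h u = sSup (h '' Set.Ico 0 u) :=
  if_neg (not_le.2 hu)

end Stmt14Aux

/-- If `gᵢ(tᵢ) = g_{i+1}(t_{i+1})` and each `gᵢ` is continuous and strictly
increasing from the left at `tᵢ`, then `t = γ(‖t‖₁)`. -/
theorem stmt14 (m : ℕ) (g : Fin m → ℝ → ℝ) (hg : ∀ i, Dpp (g i))
    (f κ : ℝ → ℝ) (γ : Fin m → ℝ → ℝ)
    (hf : f = fun s => ∑ j, ginv (g j) s) (hκ : κ = ginv f)
    (hγ : ∀ i, γ i = stilde (ginv (g i)) κ)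
    (t : Fin m → ℝ) (ht : ∀ i, 0 ≤ t i)
    (hchain : ∀ (i : ℕ) (hi : i + 1 < m),
      g ⟨i, Nat.lt_of_succ_lt hi⟩ (t ⟨i, Nat.lt_of_succ_lt hi⟩) = g ⟨i + 1, hi⟩ (t ⟨i + 1, hi⟩))
    (hcont : ∀ i, llim (g i) (t i) = g i (t i))
    (hleft : ∀ i, ∀ s : ℝ, 0 ≤ s → s < t i → g i s < g i (t i)) :
    ∀ i, t i = γ i (∑ j, t j) := by
  subst hf hκ
  intro i
  have huniv : (Finset.univ : Finset (Fin m)).Nonempty := ⟨i, Finset.mem_univ i⟩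
  rw [hγ i]
  set F : ℝ → ℝ := fun s => ∑ j, ginv (g j) s with hFdef
  set S : ℝ := ∑ j, t j with hSdef
  -- basic facts about the g j
  have gmono : ∀ j, ∀ a b : ℝ, 0 ≤ a → a ≤ b → g j a ≤ g j b :=
    fun j a b ha hab => (hg j).1 ha (ha.trans hab) hab
  have g0 : ∀ j, g j 0 = 0 := fun j => (hg j).2.2.1
  have gpos : ∀ j, ∀ v : ℝ, 0 < v → 0 < g j v := fun j => (hg j).2.2.2.1
  have gne : ∀ j, ∀ s : ℝ, {u : ℝ | 0 < u ∧ s < g j u}.Nonempty := by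
    intro j s
    obtain ⟨v, hv0, hv⟩ := (hg j).2.2.2.2 (max s 0)
    have hvpos : 0 < v := by
      rcases hv0.lt_or_eq with h | h
      · exact h
      · exfalso; rw [← h, g0 j] at hv; exact absurd hv (not_lt.2 (le_max_right s 0))
    exact ⟨v, hvpos, (le_max_left s 0).trans_lt hv⟩
  set c : ℝ := g i (t i) with hcdef
  have hcall : ∀ j, g j (t j) = c := by
    have chain0 : ∀ n (hn : n < m),
        g ⟨n, hn⟩ (t ⟨n, hn⟩) = g ⟨0, i.pos⟩ (t ⟨0, i.pos⟩) := by
      intro n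
      induction n with
      | zero => intro hn; rfl
      | succ k ih => intro hn; exact (hchain k hn).symm.trans (ih (Nat.lt_of_succ_lt hn))
    intro j
    have h1 := chain0 j.1 j.2
    have h2 := chain0 i.1 i.2
    simpa using h1.trans h2.symm
  have hc0 : 0 ≤ c := by
    have := gmono i 0 (t i) le_rfl (ht i)
    rw [g0 i] at this
    exact this
  have hcpos_t : 0 < c → ∀ j, 0 < t j := by
    intro hc j
    rcases (ht j).lt_or_eq with h | h
    · exact h
    · exfalso; have := hcall j; rw [← h, g0 j] at this; linarith
  have hS0 : 0 ≤ S := Finset.sum_nonneg fun j _ => ht j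
  -- strict upper bound for ginv below level c
  have Fact1s : ∀ j, ∀ s : ℝ, 0 ≤ s → s < c → ginv (g j) s < t j := by
    intro j s hs hsc
    have hcpos : 0 < c := lt_of_le_of_lt hs hsc
    have htj : 0 < t j := hcpos_t hcpos j
    have hll := hcont j
    rw [Stmt14Aux.llim_of_pos htj, hcall j] at hll
    have himne : (g j '' Set.Ico 0 (t j)).Nonempty := ⟨g j 0, ⟨0, ⟨le_rfl, htj⟩, rfl⟩⟩
    obtain ⟨x, ⟨v, hvmem, rfl⟩, hsx⟩ := exists_lt_of_lt_csSup himne (by rw [hll]; exact hsc)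
    have hv0 : 0 < v := by
      rcases hvmem.1.lt_or_eq with h | h
      · exact h
      · exfalso; rw [← h, g0 j] at hsx; linarith
    exact lt_of_le_of_lt (Stmt14Aux.ginv_le hv0 hsx) hvmem.2
  have Fact2 : ∀ j, ∀ s : ℝ, c ≤ s → t j ≤ ginv (g j) s := by
    intro j s hcs
    refine Stmt14Aux.le_ginv (gne j s) fun v hv hsv => ?_
    by_contra hcon
    push_neg at hcon
    have h1 : g j v ≤ c := (hcall j) ▸ gmono j v (t j) hv.le hcon.le
    linarith
  have Fact2s : ∀ j, ∀ s : ℝ, c < s → t j < ginv (g j) s := by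
    intro j s hcs
    have hrc := (hg j).2.1 (t j) (ht j)
    have hmem : Set.Iio s ∈ nhds (g j (t j)) := Iio_mem_nhds (by rw [hcall j]; exact hcs)
    have hpre := hrc hmem
    rw [mem_map, Metric.mem_nhdsWithin_iff] at hpre
    obtain ⟨ε, hε, hball⟩ := hpre
    have hvmem : (t j + ε / 2) ∈ Metric.ball (t j) ε ∩ Set.Ici (t j) := by
      constructor
      · rw [Metric.mem_ball, Real.dist_eq]
        rw [show t j + ε / 2 - t j = ε / 2 by ring, abs_of_pos (by linarith)]
        linarith
      · simp; linarith
    have hgv : g j (t j + ε / 2) < s := hball hvmem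
    have hv0 : 0 ≤ t j + ε / 2 := by linarith [ht j]
    have := Stmt14Aux.le_ginv_of_le (gmono j) (gne j s) hv0 hgv.le
    linarith
  -- facts about F
  have Fmono : ∀ a b : ℝ, a ≤ b → F a ≤ F b :=
    fun a b hab => Finset.sum_le_sum fun j _ => Stmt14Aux.ginv_mono (gne j) hab
  have FltS : ∀ s : ℝ, 0 ≤ s → s < c → F s < S :=
    fun s hs hsc => Finset.sum_lt_sum_of_nonempty huniv fun j _ => Fact1s j s hs hsc
  have FleS : ∀ s : ℝ, 0 ≤ s → s < c → F s ≤ S := fun s hs hsc => (FltS s hs hsc).le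
  have SleF : ∀ s : ℝ, c ≤ s → S ≤ F s :=
    fun s hs => Finset.sum_le_sum fun j _ => Fact2 j s hs
  have SltF : ∀ s : ℝ, c < s → S < F s :=
    fun s hs => Finset.sum_lt_sum_of_nonempty huniv fun j _ => Fact2s j s hs
  have Fne : ∀ r : ℝ, {w : ℝ | 0 < w ∧ r < F w}.Nonempty := by
    intro r
    have hM0 : (0:ℝ) ≤ max r 0 + 1 := by linarith [le_max_right r 0]
    have hw : (0:ℝ) < max (g i (max r 0 + 1)) 1 :=
      lt_of_lt_of_le one_pos (le_max_right _ _)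
    have h1 : max r 0 + 1 ≤ ginv (g i) (max (g i (max r 0 + 1)) 1) :=
      Stmt14Aux.le_ginv_of_le (gmono i) (gne i _) hM0 (le_max_left _ _)
    have h2 : ginv (g i) (max (g i (max r 0 + 1)) 1) ≤ F (max (g i (max r 0 + 1)) 1) :=
      Finset.single_le_sum (f := fun j => ginv (g j) (max (g i (max r 0 + 1)) 1))
        (fun j _ => Stmt14Aux.ginv_nonneg (gne j _)) (Finset.mem_univ i)
    exact ⟨_, hw, by linarith [le_max_left r 0]⟩
  have Kne : ∀ u : ℝ, {r : ℝ | 0 < r ∧ u < ginv F r}.Nonempty := by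
    intro u
    have hr : (0:ℝ) < max (F (max u 0 + 1)) 1 := lt_of_lt_of_le one_pos (le_max_right _ _)
    have h1 : max u 0 + 1 ≤ ginv F (max (F (max u 0 + 1)) 1) :=
      Stmt14Aux.le_ginv_of_le (fun a b _ hab => Fmono a b hab) (Fne _)
        (by linarith [le_max_right u 0]) (le_max_left _ _)
    exact ⟨_, hr, by linarith [le_max_left u 0]⟩
  have FleK : ∀ u r : ℝ, 0 < u → u < ginv F r → F u ≤ r := by
    intro u r hu hur
    by_contra hcon
    push_neg at hcon
    exact absurd (Stmt14Aux.ginv_le hu hcon) (not_le.2 hur)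
  have hginv0 : ∀ j, ginv (g j) (0:ℝ) ≤ 0 := by
    intro j
    by_contra hcon
    push_neg at hcon
    have := Stmt14Aux.ginv_le (half_pos hcon) (gpos j _ (half_pos hcon))
    linarith
  have hF0 : F 0 = 0 :=
    Finset.sum_eq_zero fun j _ => le_antisymm (hginv0 j) (Stmt14Aux.ginv_nonneg (gne j 0))
  have hKS : ginv F S = c := by
    refine le_antisymm ?_ ?_
    · by_contra hcon
      push_neg at hcon
      have hw1 : c < (c + ginv F S) / 2 := by linarith
      have hle : ginv F S ≤ (c + ginv F S) / 2 :=
        Stmt14Aux.ginv_le (lt_of_le_of_lt hc0 hw1) (SltF _ hw1)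
      linarith
    · refine Stmt14Aux.le_ginv (Fne S) fun w hw hSw => ?_
      by_contra hcon
      push_neg at hcon
      exact absurd hSw (not_lt.2 (FleS w hw.le hcon))
  have hFK : ∀ w : ℝ, 0 ≤ w → F w ≤ ginv (ginv F) w := by
    intro w hw
    refine Stmt14Aux.le_ginv (Kne w) fun r hr hwr => ?_
    rcases hw.lt_or_eq with h | h
    · exact FleK w r h hwr
    · rw [← h, hF0]; exact hr.le
  -- the key package under 0 < c
  have hKey : 0 < c →
      llim (ginv (ginv F)) c = S ∧ llim (ginv (g i)) c = t i ∧ S ≤ ginv (ginv F) c := by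
    intro hcpos
    have hGlow : ∀ ε : ℝ, 0 < ε → ∃ w : ℝ, 0 ≤ w ∧ w < c ∧ ∀ j, t j - ε ≤ ginv (g j) w := by
      intro ε hε
      refine ⟨Finset.univ.sup' huniv (fun j => g j (max (t j - ε) 0)), ?_, ?_, ?_⟩
      · refine le_trans ?_ (Finset.le_sup' (f := fun j => g j (max (t j - ε) 0)) (Finset.mem_univ i))
        have := gmono i 0 (max (t i - ε) 0) le_rfl (le_max_right _ _)
        rw [g0 i] at this
        exact this
      · rw [Finset.sup'_lt_iff huniv]
        intro j _
        rcases le_or_gt (t j - ε) 0 with h | h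
        · rw [max_eq_right h, g0 j]; exact hcpos
        · rw [max_eq_left h.le]
          have := hleft j (t j - ε) h.le (by linarith)
          rw [hcall j] at this
          exact this
      · intro j
        rcases le_or_gt (t j - ε) 0 with h | h
        · exact le_trans h (Stmt14Aux.ginv_nonneg (gne j _))
        · refine Stmt14Aux.le_ginv_of_le (gmono j) (gne j _) h.le ?_
          calc g j (t j - ε) = g j (max (t j - ε) 0) := by rw [max_eq_left h.le]
            _ ≤ _ := Finset.le_sup' (f := fun j => g j (max (t j - ε) 0)) (Finset.mem_univ j)
    have hbddK : BddAbove (ginv (ginv F) '' Set.Ico 0 c) := by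
      refine ⟨ginv (ginv F) c, ?_⟩
      rintro x ⟨v, hv, rfl⟩
      exact Stmt14Aux.ginv_mono Kne hv.2.le
    have hbddGi : BddAbove (ginv (g i) '' Set.Ico 0 c) := by
      refine ⟨t i, ?_⟩
      rintro x ⟨v, hv, rfl⟩
      exact (Fact1s i v hv.1 hv.2).le
    have hmne : Nonempty (Fin m) := ⟨i⟩
    have hLlimK : llim (ginv (ginv F)) c = S := by
      rw [Stmt14Aux.llim_of_pos hcpos]
      refine le_antisymm (csSup_le ⟨ginv (ginv F) 0, ⟨0, ⟨le_rfl, hcpos⟩, rfl⟩⟩ ?_) ?_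
      · rintro x ⟨w, hw, rfl⟩
        by_contra hcon
        push_neg at hcon
        have hr1 : S < (S + ginv (ginv F) w) / 2 := by linarith
        have hrpos : (0:ℝ) < (S + ginv (ginv F) w) / 2 := lt_of_le_of_lt hS0 hr1
        have hKr : c ≤ ginv F ((S + ginv (ginv F) w) / 2) := by
          refine Stmt14Aux.le_ginv (Fne _) fun v hv hrv => ?_
          by_contra hcc
          push_neg at hcc
          exact absurd hrv (not_lt.2 (le_trans (FleS v hv.le hcc) hr1.le))
        have := Stmt14Aux.ginv_le hrpos (lt_of_lt_of_le hw.2 hKr)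
        linarith
      · by_contra hcon
        push_neg at hcon
        set L := sSup (ginv (ginv F) '' Set.Ico 0 c) with hL
        have hmR : (0:ℝ) < m := by exact_mod_cast Fin.pos i
        have hε : (0:ℝ) < (S - L) / (2 * m) := by
          apply div_pos (by linarith) (by linarith)
        obtain ⟨w, hw0, hwc, hwj⟩ := hGlow _ hε
        have h1 : S - m * ((S - L) / (2 * m)) ≤ F w := by
          have : ∑ j, (t j - (S - L) / (2 * m)) ≤ F w := Finset.sum_le_sum fun j _ => hwj j
          calc S - m * ((S - L) / (2 * m)) = ∑ j, (t j - (S - L) / (2 * m)) := by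
                rw [Finset.sum_sub_distrib, Finset.sum_const, Finset.card_univ,
                  Fintype.card_fin, ← hSdef, nsmul_eq_mul]
            _ ≤ F w := this
        have h2 : F w ≤ ginv (ginv F) w := hFK w hw0
        have h3 : ginv (ginv F) w ≤ L := le_csSup hbddK ⟨w, ⟨hw0, hwc⟩, rfl⟩
        have h4 : (m:ℝ) * ((S - L) / (2 * m)) = (S - L) / 2 := by
          field_simp
        linarith
    refine ⟨hLlimK, ?_, ?_⟩
    · rw [Stmt14Aux.llim_of_pos hcpos]
      refine le_antisymm (csSup_le ⟨ginv (g i) 0, ⟨0, ⟨le_rfl, hcpos⟩, rfl⟩⟩ ?_) ?_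
      · rintro x ⟨w, hw, rfl⟩
        exact (Fact1s i w hw.1 hw.2).le
      · by_contra hcon
        push_neg at hcon
        set L := sSup (ginv (g i) '' Set.Ico 0 c) with hL
        have hε : (0:ℝ) < (t i - L) / 2 := by linarith
        obtain ⟨w, hw0, hwc, hwj⟩ := hGlow _ hε
        have h3 : ginv (g i) w ≤ L := le_csSup hbddGi ⟨w, ⟨hw0, hwc⟩, rfl⟩
        linarith [hwj i]
    · refine Stmt14Aux.le_ginv (Kne c) fun r hr hcr => ?_
      exact le_trans (SleF c le_rfl) (FleK c r hcpos hcr)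
  -- now split on the interpolation condition
  by_cases hcond : ∃ u : ℝ, JumpAt (ginv (g i)) u ∧
      S ∈ Set.Icc (llim (ginv (ginv F)) u) (ginv (ginv F) u)
  · simp only [stilde, dif_pos hcond]
    obtain ⟨hjump, hmem⟩ := Classical.choose_spec hcond
    set u := Classical.choose hcond with hudef
    have hu0 : 0 < u := by
      by_contra hcon
      push_neg at hcon
      have h1 : llim (ginv (g i)) u = ginv (g i) 0 := if_pos hcon
      have h2 : ginv (g i) u ≤ ginv (g i) 0 := Stmt14Aux.ginv_mono (gne i) hcon
      unfold JumpAt at hjump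
      rw [h1] at hjump
      linarith
    have huc : u = c := by
      rcases lt_trichotomy u c with hlt | heq | hgt
      · exfalso
        have hcpos : 0 < c := lt_trans hu0 hlt
        have hSpos : 0 < S := Finset.sum_pos (fun j _ => hcpos_t hcpos j) huniv
        have hw'1 : u < (u + c) / 2 := by linarith
        have hw'2 : (u + c) / 2 < c := by linarith
        have hw'0 : (0:ℝ) ≤ (u + c) / 2 := by linarith
        have hFw' : F ((u + c) / 2) < S := FltS _ hw'0 hw'2
        have hms : max (F ((u + c) / 2)) 0 < S := max_lt hFw' hSpos
        set r := (max (F ((u + c) / 2)) 0 + S) / 2 with hrdef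
        have hr0 : 0 < r := by have := le_max_right (F ((u + c) / 2)) 0; rw [hrdef]; linarith
        have hrS : r < S := by rw [hrdef]; linarith
        have hrF : F ((u + c) / 2) < r := by
          have := le_max_left (F ((u + c) / 2)) 0; rw [hrdef]; linarith
        have hwK : (u + c) / 2 ≤ ginv F r := by
          refine Stmt14Aux.le_ginv (Fne r) fun v hv hrv => ?_
          by_contra hcc
          push_neg at hcc
          exact absurd hrv (not_lt.2 (le_trans (Fmono v _ hcc.le) hrF.le))
        have hle : ginv (ginv F) u ≤ r :=
          Stmt14Aux.ginv_le hr0 (lt_of_lt_of_le hw'1 hwK)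
        have := hmem.2
        linarith
      · exact heq
      · exfalso
        have hu1pos : 0 < (c + u) / 2 := by linarith
        have h11 : c < (c + u) / 2 := by linarith
        have h12 : (c + u) / 2 < u := by linarith
        have hgKu1 : S < ginv (ginv F) ((c + u) / 2) := by
          refine lt_of_lt_of_le (SltF _ h11) ?_
          exact Stmt14Aux.le_ginv (Kne _) fun r hr hu1r => FleK _ r hu1pos hu1r
        have hbdd : BddAbove (ginv (ginv F) '' Set.Ico 0 u) := by
          refine ⟨ginv (ginv F) u, ?_⟩
          rintro x ⟨v, hv, rfl⟩
          exact Stmt14Aux.ginv_mono Kne hv.2.le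
        have hle : ginv (ginv F) ((c + u) / 2) ≤ llim (ginv (ginv F)) u := by
          rw [Stmt14Aux.llim_of_pos hu0]
          exact le_csSup hbdd ⟨(c + u) / 2, ⟨hu1pos.le, h12⟩, rfl⟩
        have := hmem.1
        linarith
    have hcpos : 0 < c := huc ▸ hu0
    obtain ⟨hLlimK, hAi, _⟩ := hKey hcpos
    rw [huc, hLlimK, hAi, sub_self, mul_zero, zero_div, add_zero]
  · simp only [stilde, dif_neg hcond]
    rw [hKS]
    refine le_antisymm (Fact2 i c le_rfl) ?_
    by_contra hcon
    push_neg at hcon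
    rcases hc0.lt_or_eq with hcpos | hczero
    · obtain ⟨hLlimK, hAi, hRK⟩ := hKey hcpos
      refine hcond ⟨c, ?_, ?_⟩
      · unfold JumpAt
        rw [hAi]
        exact hcon
      · exact ⟨hLlimK.le, hRK⟩
    · rw [← hczero] at hcon
      linarith [hginv0 i, ht i]
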